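/- Let A be the bounded linear operator on the complex Banach space c₀ defined by (A x)(1) = 0 and (A x)(k) = (x(1) − x(k))/k for k ≥ 2. If λ ∈ ℂ is purely imaginary (Re λ = 0, including λ = 0) and x ∈ c₀ satisfies A x = λ x, then x = 0. In other words, A has no eigenvector associated with a purely imaginary eigenvalue or with 0. -/
import Mathlib


open ZeroAtInfty Filter Topology

/-- `c₀` is modelled as `C₀(ℕ, ℂ)`, the space of sequences of complex numbers tending to `0`
with the supremum norm.  `stdBasis k` is the standard unit vector which is `1` in coordinate `k`
and `0` elsewhere (indices are `0`-based, so `stdBasis (k-1)` is the paper's `e_k`). -/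
noncomputable def stdBasis (k : ℕ) : C₀(ℕ, ℂ) :=
  { toFun := fun j => if j = k then 1 else 0
    continuous_toFun := continuous_of_discreteTopology
    zero_at_infty' := by
      rw [cocompact_eq_atTop]
      refine tendsto_nhds_of_eventually_eq ?_
      filter_upwards [eventually_gt_atTop k] with j hj
      simp [Nat.ne_of_gt hj] }


/-- The operator `A` has no eigenvector associated with a purely imaginary eigenvalue
(including `0`): if `Re λ = 0` and `A x = λ x` then `x = 0`. -/
theorem c0_operator_A_no_imaginary_eigenvalue (A : C₀(ℕ, ℂ) →L[ℂ] C₀(ℕ, ℂ))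
    (hA : ∀ x : C₀(ℕ, ℂ), (A x) 0 = 0 ∧
      ∀ k : ℕ, 1 ≤ k → (A x) k = (x 0 - x k) / ((k : ℂ) + 1)) :
    ∀ lam : ℂ, lam.re = 0 → ∀ x : C₀(ℕ, ℂ), A x = lam • x → x = 0 := by
  intro lam hre x heq
  obtain ⟨h0, hk⟩ := hA x
  have hcoord : ∀ k : ℕ, (A x) k = lam * x k := by
    intro k
    have := DFunLike.congr_fun heq k
    simpa using this
  have hkpos : ∀ k : ℕ, (k : ℂ) + 1 ≠ 0 := by
    intro k
    exact Nat.cast_add_one_ne_zero k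
  by_cases hlam : lam = 0
  · -- λ = 0 : x is constant, and tends to 0, so x = 0
    have hconst : ∀ k : ℕ, 1 ≤ k → x k = x 0 := by
      intro k h1
      have h := (hk k h1).symm.trans (hcoord k)
      rw [hlam, zero_mul, div_eq_zero_iff] at h
      rcases h with h | h
      · exact (sub_eq_zero.mp h).symm
      · exact absurd h (hkpos k)
    have hx0 : x 0 = 0 := by
      have htend : Tendsto (fun k : ℕ => x k) atTop (nhds 0) := by
        have := x.zero_at_infty'
        rwa [cocompact_eq_atTop] at this
      have htend' : Tendsto (fun _ : ℕ => x 0) atTop (nhds 0) := by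
        refine htend.congr' ?_
        filter_upwards [eventually_ge_atTop 1] with k h1
        exact hconst k h1
      exact tendsto_nhds_unique tendsto_const_nhds htend'
    ext k
    rcases Nat.eq_zero_or_pos k with rfl | h1
    · simpa using hx0
    · simpa using (hconst k h1).trans hx0
  · -- λ ≠ 0
    have hx0 : x 0 = 0 := by
      have := (hcoord 0).symm.trans h0
      exact (mul_eq_zero.mp this).resolve_left hlam
    ext k
    rcases Nat.eq_zero_or_pos k with rfl | h1
    · simpa using hx0
    · have h := (hk k h1).symm.trans (hcoord k)
      rw [hx0, zero_sub, div_eq_iff (hkpos k)] at h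
      -- -x k = lam * x k * (k+1)
      have hfac : x k * (lam * ((k : ℂ) + 1) + 1) = 0 := by ring_nf; linear_combination -h
      have hne : lam * ((k : ℂ) + 1) + 1 ≠ 0 := by
        intro hc
        have : (lam * ((k : ℂ) + 1) + 1).re = 0 := by rw [hc]; simp
        simp [Complex.add_re, Complex.mul_re, hre] at this
      simpa using (mul_eq_zero.mp hfac).resolve_right hne
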